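/- Let (Ω, F, P) be a probability space, let k ≥ 1 be an integer, and let N : Ω → ℕ be a random variable with N ≥ k almost surely. Then E[1/(N(N−1)⋯(N−k+1))] = (1/(k−1)!) · ∫₀^∞ (e^z − 1)^{k−1} · E[e^{−zN}] dz. -/
import Mathlib


open MeasureTheory Real

private lemma lemB (m : ℕ) : ∀ (x : ℝ), (∀ i ∈ Finset.range (m+1), x - (i:ℝ) ≠ 0) →
    ∑ j ∈ Finset.range (m+1), ((m.choose j : ℝ) * (-1)^(m-j) / (x - j))
      = (m.factorial : ℝ) / ∏ i ∈ Finset.range (m+1), (x - (i:ℝ)) := by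
  induction m with
  | zero => intro x hx; simp
  | succ m ih =>
    intro x hx
    have hx0 : x ≠ 0 := by simpa using hx 0 (by simp)
    have hxm : x - ((m:ℝ)+1) ≠ 0 := by simpa using hx (m+1) (by simp)
    have hx1 : ∀ i ∈ Finset.range (m+1), (x-1) - (i:ℝ) ≠ 0 := by
      intro i hi
      have h := hx (i+1) (by simp at hi ⊢; omega)
      push_cast at h ⊢
      intro hc; apply h; linarith
    have hx2 : ∀ i ∈ Finset.range (m+1), x - (i:ℝ) ≠ 0 := by
      intro i hi
      exact hx i (by simp at hi ⊢; omega)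
    have key1 := ih (x-1) hx1
    have key2 := ih x hx2
    have hterm : ∀ i ∈ Finset.range (m+1),
        ((m+1).choose (i+1) : ℝ) * (-1)^(m+1-(i+1)) / (x - ((i+1 : ℕ):ℝ))
          = (m.choose i : ℝ) * (-1)^(m-i) / ((x-1) - (i:ℝ))
            + (m.choose (i+1) : ℝ) * (-1)^(m-i) / (x - ((i+1 : ℕ):ℝ)) := by
      intro i hi
      rw [Nat.choose_succ_succ, Nat.succ_sub_succ]
      push_cast
      rw [add_mul, add_div]
      congr 2
      ring_nf
    have step1 : ∑ i ∈ Finset.range (m+1),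
        ((m+1).choose (i+1) : ℝ) * (-1)^(m+1-(i+1)) / (x - ((i+1 : ℕ):ℝ))
        = (m.factorial : ℝ) / ∏ i ∈ Finset.range (m+1), ((x-1) - (i:ℝ))
          + ∑ i ∈ Finset.range (m+1), (m.choose (i+1) : ℝ) * (-1)^(m-i) / (x - ((i+1 : ℕ):ℝ)) := by
      rw [Finset.sum_congr rfl hterm, Finset.sum_add_distrib, key1]
    have step2 : ∑ i ∈ Finset.range (m+1), (m.choose (i+1) : ℝ) * (-1)^(m-i) / (x - ((i+1 : ℕ):ℝ))
        = - ((m.factorial : ℝ) / ∏ i ∈ Finset.range (m+1), (x - (i:ℝ))) - (-1)^(m+1) / x := by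
      have e1 : ∑ j ∈ Finset.range (m+2), (m.choose j : ℝ) * (-1)^(m+1-j) / (x - (j:ℝ))
          = ∑ i ∈ Finset.range (m+1), (m.choose (i+1) : ℝ) * (-1)^(m+1-(i+1)) / (x - ((i+1 : ℕ):ℝ))
            + (m.choose 0 : ℝ) * (-1)^(m+1-0) / (x - ((0:ℕ):ℝ)) :=
        Finset.sum_range_succ' _ _
      have e2 : ∑ j ∈ Finset.range (m+2), (m.choose j : ℝ) * (-1)^(m+1-j) / (x - (j:ℝ))
          = ∑ j ∈ Finset.range (m+1), (m.choose j : ℝ) * (-1)^(m+1-j) / (x - (j:ℝ)) := by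
        rw [Finset.sum_range_succ, Nat.choose_succ_self]
        simp
      have e3 : ∑ j ∈ Finset.range (m+1), (m.choose j : ℝ) * (-1)^(m+1-j) / (x - (j:ℝ))
          = - ∑ j ∈ Finset.range (m+1), (m.choose j : ℝ) * (-1)^(m-j) / (x - (j:ℝ)) := by
        rw [← Finset.sum_neg_distrib]
        refine Finset.sum_congr rfl fun j hj => ?_
        have : m + 1 - j = (m - j) + 1 := by simp at hj; omega
        rw [this, pow_succ]
        ring
      have conv1 : ∑ i ∈ Finset.range (m+1),
            (m.choose (i+1) : ℝ) * (-1)^(m+1-(i+1)) / (x - ((i+1 : ℕ):ℝ))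
          = ∑ i ∈ Finset.range (m+1), (m.choose (i+1) : ℝ) * (-1)^(m-i) / (x - ((i+1 : ℕ):ℝ)) :=
        Finset.sum_congr rfl fun i _ => by rw [Nat.succ_sub_succ]
      have := e1
      rw [e2, e3, key2, conv1] at this
      simp only [Nat.choose_zero_right, Nat.cast_one, one_mul, Nat.cast_zero, sub_zero,
        Nat.sub_zero] at this
      linarith
    have lhs_eq : ∑ j ∈ Finset.range (m+1+1), (((m+1).choose j : ℝ)) * (-1)^(m+1-j) / (x - (j:ℝ))
        = ∑ i ∈ Finset.range (m+1),
            ((m+1).choose (i+1) : ℝ) * (-1)^(m+1-(i+1)) / (x - ((i+1 : ℕ):ℝ))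
          + ((m+1).choose 0 : ℝ) * (-1)^(m+1-0) / (x - ((0:ℕ):ℝ)) :=
      Finset.sum_range_succ' _ _
    rw [lhs_eq, step1, step2]
    simp only [Nat.choose_zero_right, Nat.cast_one, one_mul, Nat.cast_zero, sub_zero,
      Nat.sub_zero]
    set A := ∏ i ∈ Finset.range (m+1), ((x-1) - (i:ℝ)) with hAdef
    set B := ∏ i ∈ Finset.range (m+1), (x - (i:ℝ)) with hBdef
    have hA : A ≠ 0 := Finset.prod_ne_zero_iff.mpr hx1
    have hB : B ≠ 0 := Finset.prod_ne_zero_iff.mpr hx2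
    have hCA : ∏ i ∈ Finset.range (m+1+1), (x - (i:ℝ)) = A * x := by
      rw [Finset.prod_range_succ']
      simp only [Nat.cast_zero, sub_zero, hAdef]
      congr 1
      exact Finset.prod_congr rfl fun i hi => by push_cast; ring
    have hCB : ∏ i ∈ Finset.range (m+1+1), (x - (i:ℝ)) = B * (x - ((m:ℝ)+1)) := by
      rw [Finset.prod_range_succ, hBdef]; push_cast; ring_nf
    have hAB : A * x = B * (x - ((m:ℝ)+1)) := by rw [← hCA, hCB]
    have hfac : ((m+1).factorial : ℝ) = (m.factorial : ℝ) * ((m:ℝ)+1) := by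
      rw [Nat.factorial_succ]; push_cast; ring
    rw [hCA, hfac]
    have : (m.factorial : ℝ) / A - (m.factorial : ℝ) / B
        = (m.factorial : ℝ) * ((m:ℝ)+1) / (A * x) := by
      have hB' : B = A * x / (x - ((m:ℝ)+1)) := (eq_div_iff hxm).mpr hAB.symm
      rw [hB']
      field_simp
      ring
    linarith [this]

private lemma int_exp_neg_mul {c : ℝ} (hc : 0 < c) :
    ∫ z in Set.Ioi (0:ℝ), Real.exp (-(c * z)) = 1 / c := by
  have h := integral_comp_mul_left_Ioi (fun x => Real.exp (-x)) 0 hc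
  simp only [mul_zero, Real.exp_zero, smul_eq_mul, integral_exp_neg_Ioi, neg_zero] at h
  rw [h]
  simp [one_div]

private lemma lemA (m n : ℕ) (hn : m + 1 ≤ n) :
    ∫ z in Set.Ioi (0:ℝ), (Real.exp z - 1)^m * Real.exp (-z * (n:ℝ))
      = (m.factorial : ℝ) / ∏ i ∈ Finset.range (m+1), ((n:ℝ) - (i:ℝ)) := by
  have hexp : ∀ z : ℝ, (Real.exp z - 1)^m * Real.exp (-z * (n:ℝ))
      = ∑ j ∈ Finset.range (m+1),
          ((-1:ℝ)^(m-j) * (m.choose j : ℝ)) * Real.exp (-(((n:ℝ) - (j:ℝ)) * z)) := by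
    intro z
    rw [sub_pow, Finset.sum_mul]
    refine Finset.sum_congr rfl fun j hj => ?_
    have hj' : j ≤ m := by simp at hj; omega
    have h1 : (-1:ℝ)^(j+m) = (-1)^(m-j) := by
      have : j + m = (m - j) + 2*j := by omega
      rw [this, pow_add, pow_mul]
      simp
    have h2 : Real.exp z ^ j * Real.exp (-z * (n:ℝ)) = Real.exp (-(((n:ℝ) - (j:ℝ)) * z)) := by
      rw [← Real.exp_nat_mul, ← Real.exp_add]
      congr 1
      ring
    rw [one_pow, h1, show ((-1:ℝ)^(m-j) * Real.exp z ^ j * 1 * ↑(m.choose j)) * Real.exp (-z*(n:ℝ))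
      = ((-1:ℝ)^(m-j) * ↑(m.choose j)) * (Real.exp z ^ j * Real.exp (-z*(n:ℝ))) from by ring, h2]
  have hpos : ∀ j ∈ Finset.range (m+1), (0:ℝ) < (n:ℝ) - (j:ℝ) := by
    intro j hj
    simp only [Finset.mem_range] at hj
    have : j < n := by omega
    have := (Nat.cast_lt (α := ℝ)).mpr this
    linarith
  have hint : ∀ j ∈ Finset.range (m+1), IntegrableOn
      (fun z => ((-1:ℝ)^(m-j) * (m.choose j : ℝ)) * Real.exp (-(((n:ℝ) - (j:ℝ)) * z)))
      (Set.Ioi 0) := by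
    intro j hj
    have h := exp_neg_integrableOn_Ioi 0 (hpos j hj)
    simp only [neg_mul] at h ⊢
    exact h.const_mul _
  simp only [hexp]
  rw [MeasureTheory.integral_finset_sum _ hint]
  simp only [MeasureTheory.integral_const_mul]
  have : ∀ j ∈ Finset.range (m+1),
      ((-1:ℝ)^(m-j) * (m.choose j : ℝ)) * ∫ z in Set.Ioi (0:ℝ), Real.exp (-(((n:ℝ) - (j:ℝ)) * z))
      = (m.choose j : ℝ) * (-1)^(m-j) / ((n:ℝ) - (j:ℝ)) := by
    intro j hj
    rw [int_exp_neg_mul (hpos j hj)]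
    ring
  rw [Finset.sum_congr rfl this]
  exact lemB m (n:ℝ) (fun i hi => ne_of_gt (hpos i hi))

private lemma bnd (m n : ℕ) (hn : m + 1 ≤ n) {z : ℝ} (hz : 0 < z) :
    ‖(Real.exp z - 1)^m * Real.exp (-z * (n:ℝ))‖ ≤ Real.exp (-z) := by
  have h0 : (0:ℝ) ≤ Real.exp z - 1 := by
    have := Real.one_le_exp hz.le
    linarith
  rw [Real.norm_eq_abs, abs_of_nonneg (by positivity)]
  have h1 : (Real.exp z - 1)^m ≤ (Real.exp z)^m :=
    pow_le_pow_left₀ h0 (by linarith) m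
  have h2 : (Real.exp z)^m * Real.exp (-z * (n:ℝ)) = Real.exp ((m:ℝ)*z - z*(n:ℝ)) := by
    rw [← Real.exp_nat_mul, ← Real.exp_add]
    congr 1
    ring
  have hmn : (m:ℝ) + 1 ≤ (n:ℝ) := by exact_mod_cast hn
  calc (Real.exp z - 1)^m * Real.exp (-z * (n:ℝ))
      ≤ (Real.exp z)^m * Real.exp (-z * (n:ℝ)) := by
        have := Real.exp_pos (-z * (n:ℝ))
        nlinarith
    _ = Real.exp ((m:ℝ)*z - z*(n:ℝ)) := h2
    _ ≤ Real.exp (-z) := Real.exp_le_exp.mpr (by nlinarith)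

/-- Lemma 4.8 (reciprocal descending factorial formula): if `N ≥ k` almost surely
(`k ≥ 1`), then
`E[1/(N(N−1)⋯(N−k+1))] = (1/(k−1)!) ∫₀^∞ (e^z − 1)^{k−1} E[e^{−zN}] dz`. -/
theorem integral_inv_descFactorial
    {Ω : Type*} [MeasurableSpace Ω] (P : Measure Ω) [IsProbabilityMeasure P]
    (k : ℕ) (hk : 1 ≤ k) (N : Ω → ℕ) (hN : Measurable N)
    (hNk : ∀ᵐ ω ∂P, k ≤ N ω) :
    ∫ ω, 1 / ∏ i ∈ Finset.range k, ((N ω : ℝ) - (i : ℝ)) ∂P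
      = (1 / (Nat.factorial (k - 1) : ℝ)) *
          ∫ z in Set.Ioi (0 : ℝ),
            (Real.exp z - 1) ^ (k - 1) * ∫ ω, Real.exp (-z * (N ω : ℝ)) ∂P := by
  obtain ⟨m, rfl⟩ : ∃ m, k = m + 1 := ⟨k - 1, (Nat.succ_pred_eq_of_pos hk).symm⟩
  simp only [Nat.add_sub_cancel]
  set ν := volume.restrict (Set.Ioi (0:ℝ)) with hν
  set f : Ω → ℝ → ℝ := fun ω z => (Real.exp z - 1)^m * Real.exp (-z * (N ω : ℝ)) with hf
  have hNmeas : Measurable (fun ω => (N ω : ℝ)) := by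
    exact Measurable.comp (measurable_from_top) hN
  have hmeas : Measurable (Function.uncurry f) := by
    apply Measurable.mul
    · exact ((measurable_snd.exp.sub measurable_const).pow_const m)
    · exact (measurable_snd.neg.mul (hNmeas.comp measurable_fst)).exp
  have hexpneg : IntegrableOn (fun z : ℝ => Real.exp (-z)) (Set.Ioi 0) := by
    have := exp_neg_integrableOn_Ioi (0:ℝ) one_pos
    simpa using this
  have hInt : Integrable (Function.uncurry f) (P.prod ν) := by
    rw [MeasureTheory.integrable_prod_iff hmeas.aestronglyMeasurable]
    constructor
    · filter_upwards [hNk] with ω hω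
      rw [hν]
      refine Integrable.mono' hexpneg ?_ ?_
      · exact (hmeas.comp (measurable_const.prodMk measurable_id)).aestronglyMeasurable
      · exact (MeasureTheory.ae_restrict_iff' measurableSet_Ioi).mpr
          (MeasureTheory.ae_of_all _ fun z hz => bnd m (N ω) hω hz)
    · refine Integrable.mono' (integrable_const (1:ℝ)) ?_ ?_
      · exact (hmeas.aestronglyMeasurable.norm).integral_prod_right'
      · filter_upwards [hNk] with ω hω
        rw [Real.norm_eq_abs,
          abs_of_nonneg (integral_nonneg fun z => norm_nonneg _)]
        rw [hν]
        calc ∫ z in Set.Ioi (0:ℝ), ‖f ω z‖ ≤ ∫ z in Set.Ioi (0:ℝ), Real.exp (-z) := by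
              refine integral_mono_of_nonneg (MeasureTheory.ae_of_all _ fun z => norm_nonneg _)
                hexpneg ?_
              exact (MeasureTheory.ae_restrict_iff' measurableSet_Ioi).mpr
                (MeasureTheory.ae_of_all _ fun z hz => bnd m (N ω) hω hz)
          _ = 1 := integral_exp_neg_Ioi_zero
  have swap : ∫ ω, ∫ z, f ω z ∂ν ∂P = ∫ z, ∫ ω, f ω z ∂P ∂ν :=
    MeasureTheory.integral_integral_swap hInt
  have step0 : ∫ ω, 1 / ∏ i ∈ Finset.range (m+1), ((N ω : ℝ) - (i : ℝ)) ∂P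
      = ∫ ω, (1 / (m.factorial : ℝ)) * ∫ z, f ω z ∂ν ∂P := by
    refine integral_congr_ae ?_
    filter_upwards [hNk] with ω hω
    rw [hν]
    rw [show (∫ z in Set.Ioi (0:ℝ), f ω z) = (m.factorial : ℝ) /
        ∏ i ∈ Finset.range (m+1), ((N ω : ℝ) - (i:ℝ)) from lemA m (N ω) hω]
    have hm : (m.factorial : ℝ) ≠ 0 := Nat.cast_ne_zero.mpr m.factorial_ne_zero
    field_simp
  rw [step0, MeasureTheory.integral_const_mul, swap]
  congr 1
  refine integral_congr_ae (MeasureTheory.ae_of_all _ fun z => ?_)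
  rw [hf]
  simp only []
  rw [MeasureTheory.integral_const_mul]
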